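/- If there exists an (n,r)-pairs-triples design with 1 ≤ r < n−1, then n is even and r is odd; moreover, if n ≡ 2 (mod 6) or n ≡ 4 (mod 6), then r ≡ n−1 (mod 6). -/

import Mathlib

open Finset


/-- A one-factor on `Fin n`: a perfect matching of the complete graph on `Fin n`,
i.e. a collection of 2-element subsets such that every vertex lies in exactly one
of them. -/
def IsOneFactor (n : ℕ) (T : Set (Finset (Fin n))) : Prop :=
  (∀ p ∈ T, p.card = 2) ∧ ∀ v : Fin n, ∃! p, p ∈ T ∧ v ∈ p

/-- An `(n,r)`-pairs-triples design: `r` pairwise disjoint one-factors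
`T 1, …, T r` on `Fin n` together with a set `R` of triples of `Fin n` such that
every pair of `Fin n` is covered exactly once: either it belongs to exactly one
one-factor and to no triple of `R`, or it belongs to no one-factor and is contained
in exactly one triple of `R`. -/
def IsPairsTriplesDesign (n r : ℕ) (T : Fin r → Set (Finset (Fin n)))
    (R : Set (Finset (Fin n))) : Prop :=
  (∀ i, IsOneFactor n (T i)) ∧
  (∀ i j, i ≠ j → Disjoint (T i) (T j)) ∧
  (∀ b ∈ R, b.card = 3) ∧
  (∀ p : Finset (Fin n), p.card = 2 →
    ((∃! i, p ∈ T i) ∧ ¬∃ b ∈ R, p ⊆ b) ∨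
      ((∀ i, p ∉ T i) ∧ ∃! b, b ∈ R ∧ p ⊆ b))

lemma onefactor_two_mul_card {n : ℕ} {T : Set (Finset (Fin n))} (h : IsOneFactor n T) :
    2 * (Set.toFinite T).toFinset.card = n := by
  classical
  set Tf := (Set.toFinite T).toFinset with hTf
  have hmem : ∀ p, p ∈ Tf ↔ p ∈ T := fun p => Set.Finite.mem_toFinset _
  have hdisj : ∀ p ∈ Tf, ∀ q ∈ Tf, p ≠ q → Disjoint p q := by
    intro p hp q hq hpq
    rw [Finset.disjoint_left]
    intro w hvp hvq
    obtain ⟨u, hu, huniq⟩ := h.2 w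
    exact hpq ((huniq p ⟨(hmem p).1 hp, hvp⟩).trans (huniq q ⟨(hmem q).1 hq, hvq⟩).symm)
  have hunion : Tf.biUnion id = Finset.univ := by
    ext w
    simp only [Finset.mem_biUnion, id, Finset.mem_univ, iff_true]
    obtain ⟨p, ⟨hpT, hvp⟩, _⟩ := h.2 w
    exact ⟨p, (hmem p).2 hpT, hvp⟩
  have hc : (Tf.biUnion id).card = ∑ u ∈ Tf, u.card := Finset.card_biUnion hdisj
  rw [hunion, Finset.card_univ, Fintype.card_fin] at hc
  have hsum : ∑ u ∈ Tf, u.card = 2 * Tf.card := by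
    rw [Finset.sum_congr rfl (fun p hp => h.1 p ((hmem p).1 hp)), Finset.sum_const,
      smul_eq_mul, mul_comm]
  exact (hc.trans hsum).symm

theorem stmt16 {n r : ℕ} (hr1 : 1 ≤ r) (hr2 : r < n - 1)
    (h : ∃ (T : Fin r → Set (Finset (Fin n))) (R : Set (Finset (Fin n))),
        IsPairsTriplesDesign n r T R) :
    Even n ∧ Odd r ∧ (n % 6 = 2 ∨ n % 6 = 4 → r % 6 = (n - 1) % 6) := by

  classical
  obtain ⟨T, R, hfac, hdisj, htri, hcov⟩ := h
  have hn3 : 3 ≤ n := by omega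
  have i0 : Fin r := ⟨0, hr1⟩
  have hne : ∀ i : Fin r, 2 * (Set.toFinite (T i)).toFinset.card = n :=
    fun i => onefactor_two_mul_card (hfac i)
  obtain ⟨m, hm⟩ : ∃ m, n = 2 * m := ⟨_, (hne i0).symm⟩
  have heven : Even n := ⟨m, by omega⟩
  -- basic facts about pairs and triples
  set Rf := (Set.toFinite R).toFinset with hRf
  have hRmem : ∀ b, b ∈ Rf ↔ b ∈ R := fun b => Set.Finite.mem_toFinset _
  have key2 : ∀ p : Finset (Fin n), p.card = 2 → (¬∃ i, p ∈ T i) →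
      ∃! b, b ∈ R ∧ p ⊆ b := by
    intro p hc hnf
    rcases hcov p hc with ⟨⟨i, hi, _⟩, _⟩ | ⟨_, hu⟩
    · exact absurd ⟨i, hi⟩ hnf
    · exact hu
  have key3 : ∀ p : Finset (Fin n), p.card = 2 → ∀ b ∈ R, p ⊆ b → ∀ i, p ∉ T i := by
    intro p hc b hb hpb
    rcases hcov p hc with ⟨_, hnb⟩ | ⟨hni, _⟩
    · exact absurd ⟨b, hb, hpb⟩ hnb
    · exact hni
  -- vertex count: fix v, count pairs through v
  set v : Fin n := ⟨0, by omega⟩ with hv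
  have himg : ∀ (s : Finset (Fin n)), v ∉ s →
      ((s.image (fun w => ({v, w} : Finset (Fin n)))).card = s.card) := by
    intro s hs
    apply Finset.card_image_of_injOn
    intro a ha b hb hab
    have hab' : ({v, a} : Finset (Fin n)) = {v, b} := hab
    have hb' : b ∈ ({v, b} : Finset (Fin n)) := by simp
    rw [← hab'] at hb'
    rcases Finset.mem_insert.mp hb' with h' | h'
    · exact absurd (h' ▸ hb) hs
    · exact (Finset.mem_singleton.mp h').symm
  set Pv : Finset (Finset (Fin n)) :=
    (Finset.univ.erase v).image (fun w => ({v, w} : Finset (Fin n))) with hPv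
  have hPv_mem : ∀ p, p ∈ Pv ↔ p.card = 2 ∧ v ∈ p := by
    intro p
    constructor
    · intro hp
      rw [hPv, Finset.mem_image] at hp
      obtain ⟨w, hw, rfl⟩ := hp
      have hwv : w ≠ v := (Finset.mem_erase.mp hw).1
      exact ⟨Finset.card_pair (Ne.symm hwv), by simp⟩
    · rintro ⟨hc, hvp⟩
      rw [hPv, Finset.mem_image]
      obtain ⟨a, b, hab, rfl⟩ := Finset.card_eq_two.mp hc
      rcases Finset.mem_insert.mp hvp with rfl | h'
      · exact ⟨b, Finset.mem_erase.mpr ⟨fun hb => hab hb.symm, Finset.mem_univ _⟩, rfl⟩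
      · have : v = b := Finset.mem_singleton.mp h'
        subst this
        exact ⟨a, Finset.mem_erase.mpr ⟨fun ha => hab ha, Finset.mem_univ _⟩,
          (Finset.pair_comm v a)⟩
  have hPv_card : Pv.card = n - 1 := by
    rw [hPv, himg _ (Finset.notMem_erase v _), Finset.card_erase_of_mem (Finset.mem_univ v),
      Finset.card_univ, Fintype.card_fin]
  set Pv1 := Pv.filter (fun p => ∃ i, p ∈ T i) with hPv1
  set Pv2 := Pv.filter (fun p => ¬∃ i, p ∈ T i) with hPv2
  have hsplit : Pv1.card + Pv2.card = n - 1 := by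
    rw [hPv1, hPv2, Finset.card_filter_add_card_filter_not, hPv_card]
  -- Pv1 has exactly r elements
  have hg : ∀ i : Fin r, ∃ p, (p ∈ T i ∧ v ∈ p) ∧ ∀ q, (q ∈ T i ∧ v ∈ q) → q = p :=
    fun i => (hfac i).2 v
  choose g hg1 hg2 using hg
  have hPv1_eq : Pv1 = Finset.univ.image g := by
    ext p
    rw [hPv1, Finset.mem_filter, hPv_mem p, Finset.mem_image]
    constructor
    · rintro ⟨⟨hc, hvp⟩, i, hi⟩
      exact ⟨i, Finset.mem_univ i, (hg2 i p ⟨hi, hvp⟩).symm⟩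
    · rintro ⟨i, -, rfl⟩
      exact ⟨⟨(hfac i).1 _ (hg1 i).1, (hg1 i).2⟩, i, (hg1 i).1⟩
  have hginj : Function.Injective g := by
    intro i j hij
    by_contra hne'
    have := Set.disjoint_left.mp (hdisj i j hne') (hg1 i).1
    rw [hij] at this
    exact this (hg1 j).1
  have hPv1_card : Pv1.card = r := by
    rw [hPv1_eq, Finset.card_image_of_injective _ hginj, Finset.card_univ, Fintype.card_fin]
  -- Pv2 is a disjoint union over triples containing v
  set Rv := Rf.filter (fun b => v ∈ b) with hRv
  have hPv2_eq : Pv2 = Rv.biUnion (fun b => (b.erase v).image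
      (fun w => ({v, w} : Finset (Fin n)))) := by
    ext p
    rw [hPv2, Finset.mem_filter, hPv_mem, Finset.mem_biUnion]
    constructor
    · rintro ⟨⟨hc, hvp⟩, hnf⟩
      obtain ⟨b, ⟨hbR, hpb⟩, -⟩ := key2 p hc hnf
      refine ⟨b, ?_, ?_⟩
      · rw [hRv, Finset.mem_filter, hRmem]; exact ⟨hbR, hpb hvp⟩
      · rw [Finset.mem_image]
        obtain ⟨x, y, hxy, rfl⟩ := Finset.card_eq_two.mp hc
        rcases Finset.mem_insert.mp hvp with rfl | h'
        · exact ⟨y, Finset.mem_erase.mpr ⟨fun hy => hxy hy.symm,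
            hpb (by simp)⟩, rfl⟩
        · have : v = y := Finset.mem_singleton.mp h'
          subst this
          exact ⟨x, Finset.mem_erase.mpr ⟨fun hx => hxy hx, hpb (by simp)⟩,
            Finset.pair_comm v x⟩
    · rintro ⟨b, hbRv, hp⟩
      rw [hRv, Finset.mem_filter, hRmem] at hbRv
      obtain ⟨hbR, hvb⟩ := hbRv
      rw [Finset.mem_image] at hp
      obtain ⟨w, hw, rfl⟩ := hp
      obtain ⟨hwv, hwb⟩ := Finset.mem_erase.mp hw
      have hc : ({v, w} : Finset (Fin n)).card = 2 := Finset.card_pair (Ne.symm hwv)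
      have hsub : ({v, w} : Finset (Fin n)) ⊆ b := by
        rw [Finset.insert_subset_iff, Finset.singleton_subset_iff]; exact ⟨hvb, hwb⟩
      refine ⟨⟨hc, by simp⟩, ?_⟩
      rintro ⟨i, hi⟩
      exact key3 _ hc b hbR hsub i hi
  have hPv2_card : Pv2.card = 2 * Rv.card := by
    rw [hPv2_eq, Finset.card_biUnion, Finset.sum_congr rfl, Finset.sum_const,
      smul_eq_mul, mul_comm]
    · intro b hb
      rw [hRv, Finset.mem_filter, hRmem] at hb
      rw [himg _ (Finset.notMem_erase v _), Finset.card_erase_of_mem hb.2,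
        htri b hb.1]
    · intro b hb b' hb' hbb'
      rw [Finset.mem_coe, hRv, Finset.mem_filter, hRmem] at hb hb'
      rw [Function.onFun, Finset.disjoint_left]
      rintro p hp hp'
      rw [Finset.mem_image] at hp hp'
      obtain ⟨w, hw, rfl⟩ := hp
      obtain ⟨hwv, hwb⟩ := Finset.mem_erase.mp hw
      obtain ⟨w', hw', he⟩ := hp'
      obtain ⟨hw'v, hw'b⟩ := Finset.mem_erase.mp hw'
      have hc : ({v, w} : Finset (Fin n)).card = 2 := Finset.card_pair (Ne.symm hwv)
      have hsub : ({v, w} : Finset (Fin n)) ⊆ b := by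
        rw [Finset.insert_subset_iff, Finset.singleton_subset_iff]; exact ⟨hb.2, hwb⟩
      have hsub' : ({v, w} : Finset (Fin n)) ⊆ b' := by
        rw [← he, Finset.insert_subset_iff, Finset.singleton_subset_iff]
        exact ⟨hb'.2, hw'b⟩
      have hnf : ¬∃ i, ({v, w} : Finset (Fin n)) ∈ T i := by
        rintro ⟨i, hi⟩
        exact key3 _ hc b hb.1 hsub i hi
      obtain ⟨c, -, hcu⟩ := key2 _ hc hnf
      exact hbb' ((hcu b ⟨hb.1, hsub⟩).trans (hcu b' ⟨hb'.1, hsub'⟩).symm)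
  have hvertex : n - 1 = r + 2 * Rv.card := by omega
  have hodd : Odd r := by rw [Nat.odd_iff]; omega
  refine ⟨heven, hodd, ?_⟩
  -- global count
  intro hmod
  set P : Finset (Finset (Fin n)) := Finset.univ.powersetCard 2 with hP
  have hP_mem : ∀ p : Finset (Fin n), p ∈ P ↔ p.card = 2 := by
    intro p; rw [hP, Finset.mem_powersetCard_univ]
  have hP_card : P.card = n.choose 2 := by
    rw [hP, Finset.card_powersetCard, Finset.card_univ, Fintype.card_fin]
  set P1 := P.filter (fun p => ∃ i, p ∈ T i) with hP1
  set P2 := P.filter (fun p => ¬∃ i, p ∈ T i) with hP2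
  have hsplitP : P1.card + P2.card = n.choose 2 := by
    rw [hP1, hP2, Finset.card_filter_add_card_filter_not, hP_card]
  have hP1_eq : P1 = Finset.univ.biUnion (fun i => (Set.toFinite (T i)).toFinset) := by
    ext p
    rw [hP1, Finset.mem_filter, hP_mem, Finset.mem_biUnion]
    constructor
    · rintro ⟨-, i, hi⟩
      exact ⟨i, Finset.mem_univ i, (Set.Finite.mem_toFinset _).mpr hi⟩
    · rintro ⟨i, -, hi⟩
      rw [Set.Finite.mem_toFinset] at hi
      exact ⟨(hfac i).1 p hi, i, hi⟩
  have hP1_card : P1.card = r * m := by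
    rw [hP1_eq, Finset.card_biUnion]
    · rw [Finset.sum_congr rfl (fun i _ => (by have := hne i; omega : (Set.toFinite (T i)).toFinset.card = m)),
        Finset.sum_const, smul_eq_mul, Finset.card_univ, Fintype.card_fin]
    · intro i _ j _ hij
      rw [Function.onFun, Finset.disjoint_left]
      intro p hp hq
      rw [Set.Finite.mem_toFinset] at hp hq
      exact Set.disjoint_left.mp (hdisj i j hij) hp hq
  have hP2_eq : P2 = Rf.biUnion (fun b => b.powersetCard 2) := by
    ext p
    rw [hP2, Finset.mem_filter, hP_mem, Finset.mem_biUnion]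
    constructor
    · rintro ⟨hc, hnf⟩
      obtain ⟨b, ⟨hbR, hpb⟩, -⟩ := key2 p hc hnf
      exact ⟨b, (hRmem b).mpr hbR, Finset.mem_powersetCard.mpr ⟨hpb, hc⟩⟩
    · rintro ⟨b, hb, hp⟩
      rw [hRmem] at hb
      obtain ⟨hpb, hc⟩ := Finset.mem_powersetCard.mp hp
      refine ⟨hc, ?_⟩
      rintro ⟨i, hi⟩
      exact key3 p hc b hb hpb i hi
  have hpc : ∀ b ∈ Rf, (Finset.powersetCard 2 b).card = 3 := by
    intro b hb
    rw [Finset.card_powersetCard, htri b ((hRmem b).mp hb)]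
    rfl
  have hP2_card : P2.card = 3 * Rf.card := by
    rw [hP2_eq, Finset.card_biUnion]
    · rw [Finset.sum_congr rfl hpc, Finset.sum_const, smul_eq_mul, mul_comm]
    · intro b hb b' hb' hbb'
      rw [Finset.mem_coe, hRmem] at hb hb'
      rw [Function.onFun, Finset.disjoint_left]
      intro p hp hp'
      obtain ⟨hpb, hc⟩ := Finset.mem_powersetCard.mp hp
      obtain ⟨hpb', -⟩ := Finset.mem_powersetCard.mp hp'
      have hnf : ¬∃ i, p ∈ T i := by
        rintro ⟨i, hi⟩
        exact key3 p hc b hb hpb i hi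
      obtain ⟨c, -, hcu⟩ := key2 p hc hnf
      exact hbb' ((hcu b ⟨hb, hpb⟩).trans (hcu b' ⟨hb', hpb'⟩).symm)
  -- arithmetic conclusion
  have hchoose : n.choose 2 = m * (n - 1) := by
    rw [Nat.choose_two_right, hm, Nat.mul_assoc,
      Nat.mul_div_cancel_left _ (by norm_num : 0 < 2)]
  set s := n - 1 - r with hs
  have hrs : n - 1 = r + s := by omega
  have heq : m * (r + s) = r * m + 3 * Rf.card := by
    rw [← hrs, ← hchoose, ← hsplitP, hP1_card, hP2_card]
  have hms : m * s = 3 * Rf.card := by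
    rw [Nat.mul_add, mul_comm m r] at heq
    exact Nat.add_left_cancel heq
  have h3 : (3 : ℕ) ∣ s := by
    rcases (Nat.Prime.dvd_mul Nat.prime_three).mp ⟨Rf.card, hms⟩ with h' | h'
    · exfalso
      rcases hmod with h'' | h'' <;> omega
    · exact h'
  have h2 : (2 : ℕ) ∣ s := by
    obtain ⟨a, ha⟩ := hodd
    omega
  omega
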